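/- Let 𝒜 ⊆ M_n be a *-subalgebra with identity, U a subspace of hermitian matrices with id ∈ U, and for projections p define K(p) = p'𝒜⁺p' ∩ U with p' = id − p. Then a projection p ∈ 𝒜 is a ground projection of some element of U (or zero) if and only if p is the greatest element, in the Löwner order, of the set {q projection in 𝒜 | K(q) = K(p)}. -/

import Mathlib

open Matrix
open scoped ComplexOrder

/-- The smallest eigenvalue (ground energy) of a matrix. -/
noncomputable def minEig {n : ℕ} (a : Matrix (Fin n) (Fin n) ℂ) : ℝ :=
  sInf {c : ℝ | ∃ v : Fin n → ℂ, v ≠ 0 ∧ a.mulVec v = (c : ℂ) • v}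

/-- The ground space of a hermitian matrix: the eigenspace of its smallest eigenvalue. -/
noncomputable def groundSpaceSet {n : ℕ} (a : Matrix (Fin n) (Fin n) ℂ) :
    Set (Fin n → ℂ) :=
  {v | a.mulVec v = (minEig a : ℂ) • v}

/-- The cone `K(p) = p'𝒜⁺p' ∩ U`, `p' = 1 - p`. -/
def coneK {n : ℕ} (𝒜 : StarSubalgebra ℂ (Matrix (Fin n) (Fin n) ℂ))
    (U : Submodule ℝ (Matrix (Fin n) (Fin n) ℂ))
    (p : Matrix (Fin n) (Fin n) ℂ) : Set (Matrix (Fin n) (Fin n) ℂ) :=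
  {u | u ∈ U ∧ ∃ a : Matrix (Fin n) (Fin n) ℂ, a ∈ 𝒜 ∧ a.PosSemidef ∧
    u = (1 - p) * a * (1 - p)}


section helpers
variable {n : ℕ}

/-- matrix extensionality via mulVec -/
lemma mulVec_ext' {A B : Matrix (Fin n) (Fin n) ℂ} (h : ∀ x, A *ᵥ x = B *ᵥ x) : A = B := by
  ext i j
  have := congrFun (h (Pi.single j 1)) i
  simpa [mulVec_single] using this

lemma herm_idem_sub_psd {p q : Matrix (Fin n) (Fin n) ℂ} (hpH : pᴴ = p) (hpi : p * p = p)
    (hqH : qᴴ = q) (hqi : q * q = q) (hpq : p * q = q) (hqp : q * p = q) :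
    (p - q).PosSemidef := by
  have h1 : (p - q)ᴴ * (p - q) = p - q := by
    rw [conjTranspose_sub, hpH, hqH]
    rw [sub_mul, mul_sub, mul_sub, hpi, hqi, hpq, hqp]
    abel
  rw [← h1]
  exact posSemidef_conjTranspose_mul_self _

lemma psd_antisymm {p q : Matrix (Fin n) (Fin n) ℂ} (h1 : (p - q).PosSemidef)
    (h2 : (q - p).PosSemidef) : p = q := by
  have key : ∀ x, (p - q) *ᵥ x = 0 := by
    intro x
    rw [← (h1.dotProduct_mulVec_zero_iff x)]
    have a1 := h1.dotProduct_mulVec_nonneg x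
    have a2 := h2.dotProduct_mulVec_nonneg x
    have : star x ⬝ᵥ (q - p) *ᵥ x = -(star x ⬝ᵥ (p - q) *ᵥ x) := by
      rw [sub_mulVec, sub_mulVec, dotProduct_sub, dotProduct_sub]; ring
    rw [this] at a2
    exact le_antisymm (neg_nonneg.mp a2) a1
  have := mulVec_ext' (B := (0 : Matrix (Fin n) (Fin n) ℂ)) (by simpa using key)
  exact sub_eq_zero.mp this

lemma dot_star_self_pos {v : Fin n → ℂ} (hv : v ≠ 0) : 0 < star v ⬝ᵥ v := by
  have h0 : 0 ≤ star v ⬝ᵥ v := by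
    have := Matrix.PosSemidef.one (n := Fin n) (R := ℂ) |>.dotProduct_mulVec_nonneg v
    simpa [one_mulVec] using this
  have hne : star v ⬝ᵥ v ≠ 0 := by
    intro h
    exact hv ((dotProduct_star_self_eq_zero).mp h)
  exact lt_of_le_of_ne h0 (Ne.symm hne)

lemma real_nonneg_of_dot {c : ℝ} {v : Fin n → ℂ} (hv : v ≠ 0)
    (h : 0 ≤ (c : ℂ) * (star v ⬝ᵥ v)) : 0 ≤ c := by
  have hp := dot_star_self_pos hv
  rw [Complex.lt_def] at hp
  rw [Complex.le_def] at h
  have hre : ((c : ℂ) * (star v ⬝ᵥ v)).re = c * (star v ⬝ᵥ v).re := by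
    simp [Complex.mul_re, ← hp.2]
  simp only [Complex.zero_re] at h hp
  rw [hre] at h
  nlinarith [h.1, hp.1]

lemma mem_coneK_iff {𝒜 : StarSubalgebra ℂ (Matrix (Fin n) (Fin n) ℂ)}
    {U : Submodule ℝ (Matrix (Fin n) (Fin n) ℂ)}
    (hU : ∀ u ∈ U, u ∈ 𝒜 ∧ uᴴ = u)
    {p : Matrix (Fin n) (Fin n) ℂ} (hpi : p * p = p) (hpH : pᴴ = p)
    {u : Matrix (Fin n) (Fin n) ℂ} :
    u ∈ coneK 𝒜 U p ↔ u ∈ U ∧ u.PosSemidef ∧ u * p = 0 := by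
  constructor
  · rintro ⟨hu, a, ha𝒜, haP, rfl⟩
    refine ⟨hu, ?_, ?_⟩
    · have h1 : (1 - p)ᴴ = 1 - p := by rw [conjTranspose_sub, conjTranspose_one, hpH]
      have := haP.mul_mul_conjTranspose_same (1 - p)
      rwa [h1] at this
    · have hpp : (1 - p) * p = 0 := by rw [sub_mul, one_mul, hpi, sub_self]
      rw [mul_assoc, hpp, mul_zero]
  · rintro ⟨hu, hP, hup⟩
    have hpu : p * u = 0 := by
      have := congrArg conjTranspose hup
      rwa [conjTranspose_mul, hpH, hP.1.eq, conjTranspose_zero] at this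
    refine ⟨hu, u, (hU u hu).1, hP, ?_⟩
    rw [sub_mul, one_mul, hpu, sub_zero, mul_sub, mul_one, hup, sub_zero]

lemma aeval_conj (V D : Matrix (Fin n) (Fin n) ℂ) (hV2 : star V * V = 1) (hV1 : V * star V = 1)
    (P : Polynomial ℂ) :
    Polynomial.aeval (V * D * star V) P = V * (Polynomial.aeval D P) * star V := by
  have hcancel : ∀ X : Matrix (Fin n) (Fin n) ℂ, star V * (V * X) = X := fun X => by
    rw [← mul_assoc, hV2, one_mul]
  have hpow : ∀ k : ℕ, (V * D * star V) ^ k = V * D ^ k * star V := by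
    intro k
    induction k with
    | zero => simp only [pow_zero, mul_one, hV1]
    | succ k ih =>
      rw [pow_succ, ih, pow_succ]
      simp only [mul_assoc, hcancel]
  induction P using Polynomial.induction_on' with
  | add p q hp hq => rw [map_add, hp, hq, map_add, mul_add, add_mul]
  | monomial k a =>
    rw [Polynomial.aeval_monomial, Polynomial.aeval_monomial, hpow k]
    simp [Algebra.algebraMap_eq_smul_one, smul_mul_assoc, mul_smul_comm]

lemma aeval_diagonal (d : Fin n → ℂ) (P : Polynomial ℂ) :
    Polynomial.aeval (diagonal d) P = diagonal (fun i => P.eval (d i)) := by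
  have h1 : Polynomial.aeval ((Matrix.diagonalAlgHom ℂ : (Fin n → ℂ) →ₐ[ℂ] _) d) P
      = (Matrix.diagonalAlgHom ℂ : (Fin n → ℂ) →ₐ[ℂ] _) (Polynomial.aeval d P) :=
    Polynomial.aeval_algHom_apply _ _ _
  have h2 : ∀ i, (Polynomial.aeval d P) i = P.eval (d i) := by
    intro i
    have := Polynomial.aeval_algHom_apply (Pi.evalAlgHom ℂ (fun _ : Fin n => ℂ) i) d P
    rw [← Polynomial.coe_aeval_eq_eval]
    exact this.symm
  have h3 : Polynomial.aeval d P = fun i => P.eval (d i) := funext h2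
  rw [h3] at h1
  exact h1

lemma kernelProj (𝒜 : StarSubalgebra ℂ (Matrix (Fin n) (Fin n) ℂ))
    {u : Matrix (Fin n) (Fin n) ℂ} (hu𝒜 : u ∈ 𝒜) (hu : u.IsHermitian) :
    ∃ q : Matrix (Fin n) (Fin n) ℂ, q ∈ 𝒜 ∧ qᴴ = q ∧ q * q = q ∧ u * q = 0 ∧
      ∀ x, u *ᵥ x = 0 → q *ᵥ x = x := by
  classical
  set V : Matrix (Fin n) (Fin n) ℂ := (hu.eigenvectorUnitary : Matrix (Fin n) (Fin n) ℂ) with hV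
  have hV1 : V * star V = 1 := mem_unitaryGroup_iff.mp hu.eigenvectorUnitary.2
  have hV2 : star V * V = 1 := mem_unitaryGroup_iff'.mp hu.eigenvectorUnitary.2
  have hcancel : ∀ X : Matrix (Fin n) (Fin n) ℂ, star V * (V * X) = X := fun X => by
    rw [← mul_assoc, hV2, one_mul]
  set e : Fin n → ℂ := fun i => if hu.eigenvalues i = 0 then 1 else 0 with he
  set q : Matrix (Fin n) (Fin n) ℂ := V * diagonal e * star V with hq
  set Λ : Matrix (Fin n) (Fin n) ℂ := diagonal (RCLike.ofReal ∘ hu.eigenvalues) with hΛ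
  have hspec : u = V * Λ * star V := hu.spectral_theorem
  have conj_mul : ∀ D₁ D₂ : Matrix (Fin n) (Fin n) ℂ,
      (V * D₁ * star V) * (V * D₂ * star V) = V * (D₁ * D₂) * star V := by
    intro D₁ D₂
    simp only [mul_assoc, hcancel]
  refine ⟨q, ?_, ?_, ?_, ?_, ?_⟩
  · -- q ∈ 𝒜 via Lagrange interpolation polynomial
    set s : Finset ℂ := Finset.univ.image (fun i => (RCLike.ofReal (hu.eigenvalues i) : ℂ))
      with hs
    set r : ℂ → ℂ := fun c => if c = 0 then 1 else 0 with hr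
    set P : Polynomial ℂ := Lagrange.interpolate s id r with hP
    have heval : ∀ i : Fin n, P.eval ((RCLike.ofReal (hu.eigenvalues i) : ℂ)) = e i := by
      intro i
      have hmem : ((RCLike.ofReal (hu.eigenvalues i) : ℂ)) ∈ s :=
        Finset.mem_image.mpr ⟨i, Finset.mem_univ i, rfl⟩
      have := Lagrange.eval_interpolate_at_node r (Set.injOn_id _) hmem
      simp only [id] at this
      rw [this, hr, he]
      simp [RCLike.ofReal_eq_zero]
    have haeval : Polynomial.aeval u P = q := by
      have hfe : (fun i => P.eval ((RCLike.ofReal ∘ hu.eigenvalues) i)) = e :=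
        funext fun i => heval i
      rw [hspec, aeval_conj _ _ hV2 hV1, aeval_diagonal, hfe, hq]
    have hmem2 : Polynomial.aeval u P ∈ Algebra.adjoin ℂ ({u} : Set _) := by
      rw [Algebra.adjoin_singleton_eq_range_aeval]
      exact ⟨P, rfl⟩
    have hle : Algebra.adjoin ℂ ({u} : Set (Matrix (Fin n) (Fin n) ℂ)) ≤ 𝒜.toSubalgebra :=
      Algebra.adjoin_le (by simpa using hu𝒜)
    exact haeval ▸ hle hmem2
  · -- hermitian
    have hse : star e = e := by
      funext i
      by_cases h : hu.eigenvalues i = 0 <;> simp [he, h]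
    rw [hq, star_eq_conjTranspose, conjTranspose_mul, conjTranspose_mul,
      conjTranspose_conjTranspose, diagonal_conjTranspose, ← star_eq_conjTranspose V, hse,
      mul_assoc]
  · -- idempotent
    have hee : (fun i => e i * e i) = e := by
      funext i
      by_cases h : hu.eigenvalues i = 0 <;> simp [he, h]
    rw [hq, conj_mul, diagonal_mul_diagonal, hee]
  · -- u * q = 0
    rw [hspec, hq, conj_mul, diagonal_mul_diagonal]
    have : (fun i => (RCLike.ofReal ∘ hu.eigenvalues) i * e i) = fun _ => (0 : ℂ) := by
      funext i
      by_cases h : hu.eigenvalues i = 0 <;> simp [he, h]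
    rw [this, diagonal_zero, mul_zero, zero_mul]
  · -- identity on kernel
    intro x hx
    set y : Fin n → ℂ := star V *ᵥ x with hy
    have hVy : V *ᵥ y = x := by
      rw [hy, mulVec_mulVec, hV1, one_mulVec]
    have hΛy : Λ *ᵥ y = 0 := by
      have h1 : u *ᵥ x = V *ᵥ (Λ *ᵥ y) := by
        rw [hspec, hy, ← mulVec_mulVec, ← mulVec_mulVec]
      have h2 : V *ᵥ (Λ *ᵥ y) = 0 := by rw [← h1, hx]
      have h3 : star V *ᵥ (V *ᵥ (Λ *ᵥ y)) = 0 := by rw [h2, mulVec_zero]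
      rwa [mulVec_mulVec, mulVec_mulVec, hV2, one_mul] at h3
    have hy_entry : ∀ i, (RCLike.ofReal (hu.eigenvalues i) : ℂ) * y i = 0 := by
      intro i
      have := congrFun hΛy i
      simpa [hΛ, mulVec_diagonal] using this
    have hEy : diagonal e *ᵥ y = y := by
      funext i
      rw [mulVec_diagonal]
      by_cases h : hu.eigenvalues i = 0
      · simp [he, h]
      · have h0 : (RCLike.ofReal (hu.eigenvalues i) : ℂ) ≠ 0 := by
          simpa [RCLike.ofReal_eq_zero] using h
        have : y i = 0 := by
          rcases mul_eq_zero.mp (hy_entry i) with h' | h'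
          · exact absurd h' h0
          · exact h'
        simp [he, h, this]
    rw [hq, ← mulVec_mulVec, ← mulVec_mulVec, ← hy, hEy, hVy]

lemma minEig_psd_of_kernel {u : Matrix (Fin n) (Fin n) ℂ} (hu : u.PosSemidef)
    {x : Fin n → ℂ} (hx : x ≠ 0) (hker : u *ᵥ x = 0) : minEig u = 0 := by
  have h0 : (0 : ℝ) ∈ {c : ℝ | ∃ v : Fin n → ℂ, v ≠ 0 ∧ u.mulVec v = (c : ℂ) • v} :=
    ⟨x, hx, by simp [hker]⟩
  have hlb : ∀ c ∈ {c : ℝ | ∃ v : Fin n → ℂ, v ≠ 0 ∧ u.mulVec v = (c : ℂ) • v}, (0:ℝ) ≤ c := by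
    rintro c ⟨v, hv, hvc⟩
    have h2 := hu.dotProduct_mulVec_nonneg v
    rw [show u *ᵥ v = (c:ℂ) • v from hvc] at h2
    refine real_nonneg_of_dot hv ?_
    simpa [dotProduct_smul, smul_eq_mul] using h2
  exact le_antisymm (csInf_le ⟨0, hlb⟩ h0) (le_csInf ⟨0, h0⟩ hlb)

lemma shift_psd {u : Matrix (Fin n) (Fin n) ℂ} (hn : n ≠ 0) (hu : u.IsHermitian) :
    (u - ((minEig u : ℝ) : ℂ) • 1).PosSemidef := by
  classical
  have : Nonempty (Fin n) := Fin.pos_iff_nonempty.mp (Nat.pos_of_ne_zero hn)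
  have hne : (Finset.univ : Finset (Fin n)).Nonempty := Finset.univ_nonempty
  set m := Finset.univ.inf' hne hu.eigenvalues with hm
  set V : Matrix (Fin n) (Fin n) ℂ := (hu.eigenvectorUnitary : Matrix (Fin n) (Fin n) ℂ) with hV
  have hV1 : V * star V = 1 := mem_unitaryGroup_iff.mp hu.eigenvectorUnitary.2
  have hsmul1 : ∀ c : ℂ, (c • (1 : Matrix (Fin n) (Fin n) ℂ)) = diagonal (fun _ => c) := by
    intro c
    ext i j
    by_cases h : i = j <;> simp [Matrix.one_apply, Matrix.diagonal_apply, h]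
  have hdiag : u - (m : ℂ) • 1
      = V * diagonal (fun i => ((hu.eigenvalues i - m : ℝ) : ℂ)) * star V := by
    have h1 : V * ((m : ℂ) • 1) * star V = (m : ℂ) • (1 : Matrix (Fin n) (Fin n) ℂ) := by
      rw [mul_smul_comm, smul_mul_assoc, mul_one, hV1]
    calc u - (m : ℂ) • 1
        = V * diagonal (RCLike.ofReal ∘ hu.eigenvalues) * star V - V * ((m:ℂ) • 1) * star V := by
          rw [h1]
          congr 1
          exact hu.spectral_theorem
      _ = V * (diagonal (RCLike.ofReal ∘ hu.eigenvalues) - (m:ℂ) • 1) * star V := by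
          rw [mul_sub, sub_mul]
      _ = V * diagonal (fun i => ((hu.eigenvalues i - m : ℝ) : ℂ)) * star V := by
          rw [hsmul1, diagonal_sub]
          congr 2
          funext i
          push_cast
          simp [Function.comp]
  have hpsd : (u - (m : ℂ) • 1).PosSemidef := by
    rw [hdiag, star_eq_conjTranspose]
    refine (posSemidef_diagonal_iff.mpr ?_).mul_mul_conjTranspose_same V
    intro i
    rw [Complex.zero_le_real]
    have := Finset.inf'_le hu.eigenvalues (Finset.mem_univ i)
    linarith [this]
  have hmem : m ∈ {c : ℝ | ∃ v : Fin n → ℂ, v ≠ 0 ∧ u.mulVec v = (c : ℂ) • v} := by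
    obtain ⟨i, _, hi⟩ := Finset.exists_mem_eq_inf' hne hu.eigenvalues
    refine ⟨⇑(hu.eigenvectorBasis i), ?_, ?_⟩
    · exact (WithLp.ofLp_eq_zero 2).ne.2 <| hu.eigenvectorBasis.orthonormal.ne_zero i
    · rw [hu.mulVec_eigenvectorBasis i, ← hi, ← hm]
      exact RCLike.real_smul_eq_coe_smul (K := ℂ) _ _
  have hlb : ∀ c ∈ {c : ℝ | ∃ v : Fin n → ℂ, v ≠ 0 ∧ u.mulVec v = (c : ℂ) • v}, m ≤ c := by
    rintro c ⟨v, hv, hvc⟩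
    have h2 := hpsd.dotProduct_mulVec_nonneg v
    have h3 : (u - (m:ℂ) • 1) *ᵥ v = ((c - m : ℝ) : ℂ) • v := by
      rw [sub_mulVec, hvc, smul_mulVec, one_mulVec]
      push_cast
      rw [sub_smul]
    rw [h3] at h2
    have h4 : (0:ℝ) ≤ c - m := real_nonneg_of_dot hv (by simpa [dotProduct_smul] using h2)
    linarith
  have hminEig : minEig u = m :=
    le_antisymm (csInf_le ⟨m, hlb⟩ hmem) (le_csInf ⟨m, hmem⟩ hlb)
  rw [minEig] at hminEig ⊢
  rw [hminEig]
  exact hpsd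

end helpers

/-- variation principle for ground spaces.  Let `𝒜 ⊆ Mₙ(ℂ)` be a
*-subalgebra with identity, `U` a real subspace of hermitian matrices in `𝒜` with
`id ∈ U`.  A projection `p ∈ 𝒜` is the ground projection of some element of `U`
(or zero) if and only if `p` is the greatest element, in the Löwner order, of the set
`{q projection in 𝒜 | K(q) = K(p)}`.  Being the ground projection of `u` is expressed
by the image of `p` being the ground space of `u`. -/
theorem stmt9 {n : ℕ} (𝒜 : StarSubalgebra ℂ (Matrix (Fin n) (Fin n) ℂ))
    (U : Submodule ℝ (Matrix (Fin n) (Fin n) ℂ))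
    (hU : ∀ u ∈ U, u ∈ 𝒜 ∧ uᴴ = u)
    (h1 : (1 : Matrix (Fin n) (Fin n) ℂ) ∈ U)
    (p : Matrix (Fin n) (Fin n) ℂ) (hp : p ∈ 𝒜) (hpH : pᴴ = p) (hpi : p * p = p) :
    (p = 0 ∨ ∃ u ∈ U, Set.range p.mulVec = groundSpaceSet u) ↔
      (∀ q : Matrix (Fin n) (Fin n) ℂ, q ∈ 𝒜 → qᴴ = q → q * q = q →
        coneK 𝒜 U q = coneK 𝒜 U p → (p - q).PosSemidef) := by
  classical
  constructor
  · rintro (rfl | ⟨u, huU, hgr⟩) q hq𝒜 hqH hqi hKeq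
    · -- p = 0
      have h1K : (1 : Matrix (Fin n) (Fin n) ℂ) ∈ coneK 𝒜 U (0 : Matrix (Fin n) (Fin n) ℂ) :=
        (mem_coneK_iff hU (by simp) (by simp)).mpr ⟨h1, Matrix.PosSemidef.one, by simp⟩
      have h1q : (1 : Matrix (Fin n) (Fin n) ℂ) ∈ coneK 𝒜 U q := by rw [hKeq]; exact h1K
      have hq0 := ((mem_coneK_iff hU hqi hqH).mp h1q).2.2
      rw [one_mul] at hq0
      rw [hq0]
      simpa using (Matrix.PosSemidef.zero (n := Fin n) (R := ℂ))
    · -- ground projection case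
      rcases Nat.eq_zero_or_pos n with hn | hn
      · have : p - q = 0 := by
          subst hn
          ext i j
          exact i.elim0
        rw [this]
        exact Matrix.PosSemidef.zero
      have hn' : n ≠ 0 := Nat.pos_iff_ne_zero.mp hn
      set v : Matrix (Fin n) (Fin n) ℂ := u - ((minEig u : ℝ) : ℂ) • 1 with hv
      have hvU : v ∈ U := by
        refine U.sub_mem huU ?_
        rw [Complex.coe_smul]
        exact U.smul_mem (minEig u) h1
      have huH : u.IsHermitian := (hU u huU).2
      have hvpsd : v.PosSemidef := shift_psd hn' huH
      have hker : ∀ x : Fin n → ℂ, v *ᵥ x = 0 ↔ x ∈ groundSpaceSet u := by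
        intro x
        rw [hv, groundSpaceSet, Set.mem_setOf_eq, sub_mulVec, smul_mulVec, one_mulVec,
          sub_eq_zero]
      have hvp : v * p = 0 := by
        apply mulVec_ext' (B := 0)
        intro x
        rw [← mulVec_mulVec, zero_mulVec]
        rw [hker]
        rw [← hgr]
        exact ⟨x, rfl⟩
      have hvK : v ∈ coneK 𝒜 U p := (mem_coneK_iff hU hpi hpH).mpr ⟨hvU, hvpsd, hvp⟩
      have hvKq : v ∈ coneK 𝒜 U q := by rw [hKeq]; exact hvK
      have hvq : v * q = 0 := ((mem_coneK_iff hU hqi hqH).mp hvKq).2.2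
      have hpq : p * q = q := by
        apply mulVec_ext'
        intro x
        rw [← mulVec_mulVec]
        have hqx : q *ᵥ x ∈ groundSpaceSet u := by
          rw [← hker, mulVec_mulVec, hvq, zero_mulVec]
        rw [← hgr] at hqx
        obtain ⟨z, hz⟩ := hqx
        rw [← hz, mulVec_mulVec, hpi]
      have hqp : q * p = q := by
        have := congrArg conjTranspose hpq
        rwa [conjTranspose_mul, hpH, hqH] at this
      exact herm_idem_sub_psd hpH hpi hqH hqi hpq hqp
  · -- backward
    intro H
    set D : Set ℕ := {k : ℕ | ∃ w ∈ coneK 𝒜 U p,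
      Module.finrank ℂ (LinearMap.ker (Matrix.mulVecLin w)) = k} with hD
    have h0K : (0 : Matrix (Fin n) (Fin n) ℂ) ∈ coneK 𝒜 U p :=
      (mem_coneK_iff hU hpi hpH).mpr ⟨U.zero_mem, Matrix.PosSemidef.zero, zero_mul p⟩
    have hDne : D.Nonempty := ⟨_, 0, h0K, rfl⟩
    obtain ⟨u₀, hu₀K, hu₀dim⟩ := Nat.sInf_mem hDne
    obtain ⟨hu₀U, hu₀psd, hu₀p⟩ := (mem_coneK_iff hU hpi hpH).mp hu₀K
    -- minimality: every element of the cone vanishes on the kernel of u₀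
    have hmin : ∀ w ∈ coneK 𝒜 U p, ∀ x, u₀ *ᵥ x = 0 → w *ᵥ x = 0 := by
      intro w hwK
      obtain ⟨hwU, hwpsd, hwp⟩ := (mem_coneK_iff hU hpi hpH).mp hwK
      by_contra hcon
      push_neg at hcon
      obtain ⟨x, hx0, hwx⟩ := hcon
      have hw'K : u₀ + w ∈ coneK 𝒜 U p :=
        (mem_coneK_iff hU hpi hpH).mpr ⟨U.add_mem hu₀U hwU, hu₀psd.add hwpsd,
          by rw [add_mul, hu₀p, hwp, add_zero]⟩
      have hle : LinearMap.ker (Matrix.mulVecLin (u₀ + w)) ≤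
          LinearMap.ker (Matrix.mulVecLin u₀) := by
        intro y hy
        rw [LinearMap.mem_ker, mulVecLin_apply] at hy ⊢
        have h2 : star y ⬝ᵥ (u₀ + w) *ᵥ y = 0 := by rw [hy, dotProduct_zero]
        rw [add_mulVec, dotProduct_add] at h2
        have a1 := hu₀psd.dotProduct_mulVec_nonneg y
        have a2 := hwpsd.dotProduct_mulVec_nonneg y
        have hz1 : star y ⬝ᵥ u₀ *ᵥ y = 0 := by
          have hb : star y ⬝ᵥ u₀ *ᵥ y = -(star y ⬝ᵥ w *ᵥ y) := by linear_combination h2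
          exact le_antisymm (hb ▸ neg_nonpos.mpr a2) a1
        exact (hu₀psd.dotProduct_mulVec_zero_iff y).mp hz1
      have hne : LinearMap.ker (Matrix.mulVecLin (u₀ + w)) ≠
          LinearMap.ker (Matrix.mulVecLin u₀) := by
        intro heq
        have hx0' : x ∈ LinearMap.ker (Matrix.mulVecLin u₀) := by
          rw [LinearMap.mem_ker, mulVecLin_apply]; exact hx0
        rw [← heq, LinearMap.mem_ker, mulVecLin_apply, add_mulVec, hx0, zero_add] at hx0'
        exact hwx hx0'
      have hlt := Submodule.finrank_lt_finrank_of_lt (lt_of_le_of_ne hle hne)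
      have hmem : Module.finrank ℂ (LinearMap.ker (Matrix.mulVecLin (u₀ + w))) ∈ D :=
        ⟨u₀ + w, hw'K, rfl⟩
      have := Nat.sInf_le hmem
      omega
    by_cases hker0 : ∀ x, u₀ *ᵥ x = 0 → x = 0
    · left
      apply mulVec_ext' (B := 0)
      intro x
      rw [zero_mulVec]
      apply hker0
      rw [mulVec_mulVec, hu₀p, zero_mulVec]
    · push_neg at hker0
      obtain ⟨x0, hx0ker, hx0ne⟩ := hker0
      obtain ⟨q, hq𝒜, hqH, hqi, huq, hqfix⟩ := kernelProj 𝒜 (hU u₀ hu₀U).1 hu₀psd.1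
      have hqp : q * p = p := by
        apply mulVec_ext'
        intro x
        rw [← mulVec_mulVec]
        apply hqfix
        rw [mulVec_mulVec, hu₀p, zero_mulVec]
      have hpq : p * q = p := by
        have := congrArg conjTranspose hqp
        rwa [conjTranspose_mul, hpH, hqH] at this
      have hKqp : coneK 𝒜 U q = coneK 𝒜 U p := by
        ext w
        rw [mem_coneK_iff hU hqi hqH, mem_coneK_iff hU hpi hpH]
        constructor
        · rintro ⟨hwU, hwpsd, hwq⟩
          refine ⟨hwU, hwpsd, ?_⟩
          calc w * p = w * (q * p) := by rw [hqp]
            _ = (w * q) * p := by rw [mul_assoc]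
            _ = 0 := by rw [hwq, zero_mul]
        · rintro ⟨hwU, hwpsd, hwp⟩
          refine ⟨hwU, hwpsd, ?_⟩
          apply mulVec_ext' (B := 0)
          intro x
          rw [zero_mulVec, ← mulVec_mulVec]
          apply hmin w ((mem_coneK_iff hU hpi hpH).mpr ⟨hwU, hwpsd, hwp⟩)
          rw [mulVec_mulVec, huq, zero_mulVec]
      have hpsd1 := H q hq𝒜 hqH hqi hKqp
      have hpsd2 : (q - p).PosSemidef := herm_idem_sub_psd hqH hqi hpH hpi hqp hpq
      have hpeq : p = q := psd_antisymm hpsd1 hpsd2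
      right
      refine ⟨u₀, hu₀U, ?_⟩
      have hmE : minEig u₀ = 0 := minEig_psd_of_kernel hu₀psd hx0ne hx0ker
      ext y
      simp only [Set.mem_range, groundSpaceSet, Set.mem_setOf_eq, hmE, Complex.ofReal_zero,
        zero_smul]
      constructor
      · rintro ⟨z, rfl⟩
        rw [mulVec_mulVec, hu₀p, zero_mulVec]
      · intro hy
        refine ⟨y, ?_⟩
        rw [hpeq]
        exact hqfix y hy
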